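/- Let P(z) be the unique formal power series with P(z) = -z + O(z^2) such that the two points y = f/(f+1) + z and ȳ = f/(f+1) + P(z) satisfy -y^{f+1} + y^f = -ȳ^{f+1} + ȳ^f. Then P(z) = -z - (2(f^2-1)/(3f))·z^2 - (4(f^2-1)^2/(9f^2))·z^3 + O(z^4). -/

import Mathlib

open PowerSeries Finset

namespace FVIaux

/-! ### Generic power series lemmas -/

lemma coeff1_mul (φ ψ : PowerSeries ℚ) :
    coeff (R := ℚ) 1 (φ * ψ) = constantCoeff (R := ℚ) φ * coeff (R := ℚ) 1 ψ + coeff (R := ℚ) 1 φ * constantCoeff (R := ℚ) ψ := by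
  rw [coeff_mul, show (Finset.HasAntidiagonal.antidiagonal 1 : Finset (ℕ×ℕ)) = {(0,1),(1,0)} by decide]
  simp [coeff_zero_eq_constantCoeff]

lemma constantCoeff_cpow (c : ℚ) (n : ℕ) (A : PowerSeries ℚ) (hA : constantCoeff (R := ℚ) A = 0) :
    constantCoeff (R := ℚ) ((C (R := ℚ) c + A) ^ n) = c ^ n := by
  simp [map_pow, map_add, hA]

lemma coeff1_cpow (c : ℚ) (n : ℕ) (A : PowerSeries ℚ) (hA : constantCoeff (R := ℚ) A = 0) :
    coeff (R := ℚ) 1 ((C (R := ℚ) c + A) ^ n) = n * c ^ (n - 1) * coeff (R := ℚ) 1 A := by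
  induction n with
  | zero => simp
  | succ m ih =>
    rw [pow_succ, coeff1_mul, constantCoeff_cpow c m A hA, ih]
    rcases Nat.eq_zero_or_pos m with hm | hm
    · subst hm; simp [hA]
    · have h1 : m - 1 + 1 = m := Nat.succ_pred_eq_of_pos hm
      have hpow : c ^ (m - 1) * c = c ^ m := by rw [← pow_succ, h1]
      simp only [map_add, constantCoeff_C, hA, add_zero, coeff_C, Nat.add_sub_cancel,
        Nat.cast_add, Nat.cast_one]
      rw [show (↑m * c ^ (m - 1) * (coeff (R := ℚ) 1) A) * c = ↑m * (c^(m-1)*c) * coeff (R := ℚ) 1 A by ring,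
        hpow]
      norm_num
      ring

/-! ### The geometric-sum factor -/

noncomputable def Sg (c : ℚ) (n : ℕ) (A B : PowerSeries ℚ) : PowerSeries ℚ :=
  ∑ i ∈ Finset.range n, (C (R := ℚ) c + A) ^ i * (C (R := ℚ) c + B) ^ (n - 1 - i)

lemma fact_pow (c : ℚ) (n : ℕ) (A B : PowerSeries ℚ) :
    (C (R := ℚ) c + A) ^ n - (C (R := ℚ) c + B) ^ n = (A - B) * Sg c n A B := by
  have := geom_sum₂_mul (C (R := ℚ) c + A) (C (R := ℚ) c + B) n
  rw [show (C (R := ℚ) c + A) - (C (R := ℚ) c + B) = A - B by ring] at this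
  rw [Sg, mul_comm, this]

lemma constantCoeff_Sg (c : ℚ) (n : ℕ) (A B : PowerSeries ℚ)
    (hA : constantCoeff (R := ℚ) A = 0) (hB : constantCoeff (R := ℚ) B = 0) :
    constantCoeff (R := ℚ) (Sg c n A B) = n * c ^ (n - 1) := by
  rw [Sg, map_sum]
  rw [Finset.sum_congr rfl (fun i hi => ?_)]
  · rw [Finset.sum_const, card_range, nsmul_eq_mul]
  · rw [map_mul, constantCoeff_cpow c i A hA, constantCoeff_cpow c (n-1-i) B hB, ← pow_add]
    congr 1
    have := mem_range.mp hi
    omega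

lemma coeff1_Sg (c : ℚ) (n : ℕ) (A B : PowerSeries ℚ)
    (hA : constantCoeff (R := ℚ) A = 0) (hB : constantCoeff (R := ℚ) B = 0) :
    coeff (R := ℚ) 1 (Sg c n A B) =
      (∑ i ∈ range n, (i:ℚ)) * c ^ (n - 2) * (coeff (R := ℚ) 1 A + coeff (R := ℚ) 1 B) := by
  rw [Sg, map_sum]
  have step : ∀ i ∈ range n, coeff (R := ℚ) 1 ((C (R := ℚ) c + A) ^ i * (C (R := ℚ) c + B) ^ (n-1-i)) =
      (i:ℚ) * c ^ (n - 2) * coeff (R := ℚ) 1 A + ((n-1-i : ℕ):ℚ) * c ^ (n - 2) * coeff (R := ℚ) 1 B := by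
    intro i hi
    have hin := mem_range.mp hi
    rw [coeff1_mul, constantCoeff_cpow c i A hA, constantCoeff_cpow c (n-1-i) B hB,
      coeff1_cpow c i A hA, coeff1_cpow c (n-1-i) B hB]
    have e1 : c ^ i * (((n-1-i:ℕ):ℚ) * c ^ (n-1-i-1) * coeff (R := ℚ) 1 B)
        = ((n-1-i : ℕ):ℚ) * c ^ (n - 2) * coeff (R := ℚ) 1 B := by
      rcases Nat.eq_zero_or_pos (n-1-i) with h | h
      · rw [h]; simp
      · have hp : c ^ i * c ^ (n-2-i) = c ^ (n-2) := by
          rw [← pow_add]; congr 1; omega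
        rw [show n-1-i-1 = n-2-i by omega]
        linear_combination (((n-1-i:ℕ):ℚ) * coeff (R := ℚ) 1 B) * hp
    have e2 : ((i:ℚ) * c ^ (i-1) * coeff (R := ℚ) 1 A) * c ^ (n-1-i)
        = (i:ℚ) * c ^ (n - 2) * coeff (R := ℚ) 1 A := by
      rcases Nat.eq_zero_or_pos i with h | h
      · rw [h]; simp
      · have hp : c ^ (i-1) * c ^ (n-1-i) = c ^ (n-2) := by
          rw [← pow_add]; congr 1; omega
        linear_combination ((i:ℕ):ℚ) * coeff (R := ℚ) 1 A * hp
    rw [e1, e2]; ring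
  rw [Finset.sum_congr rfl step, Finset.sum_add_distrib]
  have r1 : ∑ i ∈ range n, ((n-1-i:ℕ):ℚ) * c ^ (n-2) * coeff (R := ℚ) 1 B
      = (∑ i ∈ range n, (i:ℚ)) * c^(n-2) * coeff (R := ℚ) 1 B := by
    rw [Finset.sum_mul, Finset.sum_mul,
      ← Finset.sum_range_reflect (fun i => (i:ℚ) * c^(n-2) * coeff (R := ℚ) 1 B) n]
  rw [r1]
  rw [Finset.sum_mul, Finset.sum_mul, Finset.sum_mul]
  rw [← Finset.sum_add_distrib]
  congr 1; funext i
  ring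

lemma gauss (n : ℕ) (hn : 1 ≤ n) : (∑ i ∈ range n, (i:ℚ)) * 2 = (n:ℚ) * ((n:ℚ) - 1) := by
  have h := Finset.sum_range_id_mul_two n
  have e : ((∑ i ∈ range n, i : ℕ) : ℚ) = ∑ i ∈ range n, (i:ℚ) := by push_cast; rfl
  have h2 : ((∑ i ∈ range n, i : ℕ) : ℚ) * 2 = ((n * (n-1) : ℕ):ℚ) := by
    exact_mod_cast congrArg (Nat.cast (R:=ℚ)) h
  rw [← e, h2]
  push_cast [Nat.cast_sub hn]
  ring

section Sdiff
variable {f : ℕ} (hf : 2 ≤ f) (c : ℚ) (hcf : ((f:ℚ) + 1) * c = (f:ℚ))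

include hf hcf

lemma S0 (A B : PowerSeries ℚ) (hA : constantCoeff (R := ℚ) A = 0) (hB : constantCoeff (R := ℚ) B = 0) :
    constantCoeff (R := ℚ) (Sg c f A B - Sg c (f+1) A B) = 0 := by
  rw [map_sub, constantCoeff_Sg c f A B hA hB, constantCoeff_Sg c (f+1) A B hA hB]
  have e : c ^ (f + 1 - 1) = c ^ (f-1) * c := by
    rw [← pow_succ]; congr 1; omega
  rw [e]
  push_cast
  linear_combination (-(c ^ (f-1))) * hcf

lemma S1 (A B : PowerSeries ℚ) (hA : constantCoeff (R := ℚ) A = 0) (hB : constantCoeff (R := ℚ) B = 0) :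
    coeff (R := ℚ) 1 (Sg c f A B - Sg c (f+1) A B) =
      -(coeff (R := ℚ) 1 A + coeff (R := ℚ) 1 B) * ((f:ℚ) * c ^ (f - 2)) / 2 := by
  rw [map_sub, coeff1_Sg c f A B hA hB, coeff1_Sg c (f+1) A B hA hB]
  have g1 := gauss f (by omega)
  have g2 := gauss (f+1) (by omega)
  have e1 : c ^ (f + 1 - 2) = c ^ (f-2) * c := by
    rw [← pow_succ]; congr 1; omega
  rw [e1]
  push_cast at g2 ⊢
  set s := coeff (R := ℚ) 1 A + coeff (R := ℚ) 1 B
  linear_combination (c^(f-2) * s / 2) * g1 - (c^(f-2) * c * s / 2) * g2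
    - (c^(f-2) * s * (f:ℚ) / 2) * hcf
end Sdiff

/-! ### Explicit coefficients of binomial/trinomial powers -/

lemma coeff_binom (c d : ℚ) (n m : ℕ) :
    coeff (R := ℚ) m ((C (R := ℚ) c + C (R := ℚ) d * X) ^ n) = (n.choose m : ℚ) * c ^ (n - m) * d ^ m := by
  rw [add_comm, add_pow, map_sum]
  have step : ∀ k ∈ range (n+1),
      coeff (R := ℚ) m ((C (R := ℚ) d * X) ^ k * (C (R := ℚ) c) ^ (n - k) * (n.choose k : PowerSeries ℚ)) =
        if k = m then (n.choose m : ℚ) * c ^ (n - m) * d ^ m else 0 := by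
    intro k hk
    have : (C (R := ℚ) d * X) ^ k * (C (R := ℚ) c) ^ (n - k) * (n.choose k : PowerSeries ℚ)
        = C (R := ℚ) (d ^ k * c ^ (n - k) * (n.choose k : ℚ)) * X ^ k := by
      rw [mul_pow, ← map_pow, ← map_pow, ← map_natCast (C (R := ℚ)) (n.choose k), map_mul, map_mul]
      ring
    rw [this, coeff_C_mul, coeff_X_pow]
    by_cases h : m = k
    · subst h; simp; ring
    · simp [h, Ne.symm h]
  rw [Finset.sum_congr rfl step, Finset.sum_ite_eq' (range (n+1)) m
    (fun _ => (n.choose m : ℚ) * c ^ (n - m) * d ^ m)]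
  by_cases hm : m ∈ range (n+1)
  · rw [if_pos hm]
  · have hnm : n < m := by
      simp only [mem_range] at hm; omega
    rw [if_neg hm, Nat.choose_eq_zero_of_lt hnm]
    simp

lemma coeff4_trinom (c p : ℚ) (n : ℕ) (hn : 2 ≤ n) :
    coeff (R := ℚ) 4 ((C (R := ℚ) c + (C (R := ℚ) (-1) * X + C (R := ℚ) p * X ^ 2)) ^ n) =
      (n.choose 4 : ℚ) * c ^ (n - 4) + (n : ℚ) * ((n-1).choose 2 : ℚ) * p * c ^ (n - 3)
        + (n.choose 2 : ℚ) * p ^ 2 * c ^ (n - 2) := by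
  have expand : (C (R := ℚ) c + (C (R := ℚ) (-1) * X + C (R := ℚ) p * X ^ 2)) ^ n
      = ∑ k ∈ range (n+1), (C (R := ℚ) p * X ^ 2) ^ k * (C (R := ℚ) c + C (R := ℚ) (-1) * X) ^ (n - k)
          * (n.choose k : PowerSeries ℚ) := by
    rw [← add_pow]; congr 1; ring
  rw [expand, map_sum]
  have term : ∀ k, (C (R := ℚ) p * X ^ 2) ^ k * (C (R := ℚ) c + C (R := ℚ) (-1) * X) ^ (n - k)
          * (n.choose k : PowerSeries ℚ)
      = C (R := ℚ) (p ^ k * (n.choose k : ℚ)) * (X ^ (2*k) * (C (R := ℚ) c + C (R := ℚ) (-1) * X) ^ (n - k)) := by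
    intro k
    rw [mul_pow, ← map_pow, ← pow_mul, ← map_natCast (C (R := ℚ)) (n.choose k), map_mul]
    ring
  have hzero : ∀ k ∈ range (n+1), k ∉ range 3 →
      coeff (R := ℚ) 4 ((C (R := ℚ) p * X ^ 2) ^ k * (C (R := ℚ) c + C (R := ℚ) (-1) * X) ^ (n - k)
        * (n.choose k : PowerSeries ℚ)) = 0 := by
    intro k _ hk3
    have h3 : 3 ≤ k := by
      simp only [mem_range] at hk3; omega
    rw [term k, coeff_C_mul, coeff_mul]
    rw [Finset.sum_eq_zero, mul_zero]
    rintro ⟨i, j⟩ hij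
    have hij' : i + j = 4 := mem_antidiagonal.mp hij
    rw [coeff_X_pow, if_neg (by omega), zero_mul]
  rw [← Finset.sum_subset (by intro x hx; simp only [mem_range] at *; omega :
        range 3 ⊆ range (n+1)) hzero]
  rw [Finset.sum_range_succ, Finset.sum_range_succ, Finset.sum_range_one]
  rw [term 0, term 1, term 2]
  rw [coeff_C_mul, coeff_C_mul, coeff_C_mul]
  rw [show (4:ℕ) = 4 + 2*0 by ring, coeff_X_pow_mul]
  rw [show (4+2*0 : ℕ) = 2 + 2*1 by ring, coeff_X_pow_mul]
  rw [show (2+2*1 : ℕ) = 0 + 2*2 by ring, coeff_X_pow_mul]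
  rw [coeff_binom, coeff_binom, coeff_binom]
  simp only [Nat.choose_zero_right, Nat.cast_one, Nat.choose_one_right]
  rw [show n - 0 = n by omega, show n - 1 - 2 = n - 3 by omega, show n - 2 - 0 = n - 2 by omega]
  push_cast
  ring

/-! ### Product-coefficient helpers -/

lemma coeff_succ_mul_van (n : ℕ) (D S : PowerSeries ℚ)
    (hD : ∀ j < n, coeff (R := ℚ) j D = 0) (hS0 : constantCoeff (R := ℚ) S = 0) :
    coeff (R := ℚ) (n+1) (D * S) = coeff (R := ℚ) n D * coeff (R := ℚ) 1 S := by
  rw [coeff_mul, Finset.Nat.sum_antidiagonal_eq_sum_range_succ_mk]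
  rw [Finset.sum_range_succ, Finset.sum_range_succ]
  rw [Finset.sum_eq_zero (fun k hk => by
    rw [hD k (mem_range.mp hk), zero_mul])]
  rw [show n + 1 - n = 1 by omega, show n + 1 - (n+1) = 0 by omega,
    coeff_zero_eq_constantCoeff, hS0, mul_zero, add_zero, zero_add]

lemma coeff_le2_mul_van (m : ℕ) (hm : m ≤ 2) (D S : PowerSeries ℚ)
    (hd0 : constantCoeff (R := ℚ) D = 0) (hs0 : constantCoeff (R := ℚ) S = 0)
    (hs1 : coeff (R := ℚ) 1 S = 0) :
    coeff (R := ℚ) m (D * S) = 0 := by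
  interval_cases m
  · rw [coeff_zero_eq_constantCoeff, map_mul, hd0, zero_mul]
  · rw [coeff_mul, show (Finset.HasAntidiagonal.antidiagonal 1 : Finset (ℕ×ℕ)) = {(0,1),(1,0)} by decide]
    simp [coeff_zero_eq_constantCoeff, hd0, hs0, hs1]
  · rw [coeff_mul, show (Finset.HasAntidiagonal.antidiagonal 2 : Finset (ℕ×ℕ)) = {(0,2),(1,1),(2,0)} by decide]
    simp [coeff_zero_eq_constantCoeff, hd0, hs0, hs1]

lemma coeff3_mul_van (D S : PowerSeries ℚ)
    (hd0 : constantCoeff (R := ℚ) D = 0) (hd1 : coeff (R := ℚ) 1 D = 0) (hs0 : constantCoeff (R := ℚ) S = 0) :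
    coeff (R := ℚ) 3 (D * S) = coeff (R := ℚ) 2 D * coeff (R := ℚ) 1 S := by
  rw [coeff_mul,
    show (Finset.HasAntidiagonal.antidiagonal 3 : Finset (ℕ×ℕ)) = {(0,3),(1,2),(2,1),(3,0)} by decide]
  simp [coeff_zero_eq_constantCoeff, hd0, hd1, hs0]

lemma coeff4_mul_van (D S : PowerSeries ℚ)
    (hd0 : constantCoeff (R := ℚ) D = 0) (hd1 : coeff (R := ℚ) 1 D = 0) (hd2 : coeff (R := ℚ) 2 D = 0)
    (hs0 : constantCoeff (R := ℚ) S = 0) :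
    coeff (R := ℚ) 4 (D * S) = coeff (R := ℚ) 3 D * coeff (R := ℚ) 1 S := by
  rw [coeff_mul,
    show (Finset.HasAntidiagonal.antidiagonal 4 : Finset (ℕ×ℕ)) = {(0,4),(1,3),(2,2),(3,1),(4,0)} by decide]
  simp [coeff_zero_eq_constantCoeff, hd0, hd1, hd2, hs0]

/-! ### Scalar arithmetic -/

lemma cast_choose_three (n : ℕ) :
    ((n.choose 3 : ℕ) : ℚ) * 6 = (n:ℚ) * ((n:ℚ) - 1) * ((n:ℚ) - 2) := by
  induction n with
  | zero => simp
  | succ m ih =>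
    have h : (m+1).choose 3 = m.choose 3 + m.choose 2 := by
      rw [Nat.choose_succ_succ]; ring_nf
    rw [h]
    push_cast
    rw [Nat.cast_choose_two]
    push_cast at ih
    nlinarith [ih]

section Scalar
variable {f : ℕ} (hf : 2 ≤ f) (c : ℚ) (hcf : ((f:ℚ) + 1) * c = (f:ℚ))

include hf hcf

lemma A2 : ((f.choose 2 : ℕ):ℚ) * c ^ (f-2) - (((f+1).choose 2 : ℕ):ℚ) * c ^ (f-1)
    = -(f:ℚ) * c ^ (f-2) / 2 := by
  have e : c ^ (f-1) = c ^ (f-2) * c := by rw [← pow_succ]; congr 1; omega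
  rw [e, Nat.cast_choose_two, Nat.cast_choose_two]
  push_cast
  linear_combination (-(f:ℚ) * c^(f-2) / 2) * hcf

lemma Q3 (hfQ : (f:ℚ) ≠ 0) :
    2 * (((f.choose 3 : ℕ):ℚ) * c ^ (f-3) - (((f+1).choose 3 : ℕ):ℚ) * c ^ (f-2))
      = (-(2 * ((f:ℚ)^2 - 1)) / (3 * (f:ℚ))) * ((f:ℚ) * c ^ (f-2)) := by
  have h3 := cast_choose_three f
  have h3' := cast_choose_three (f+1)
  push_cast at h3 h3'
  rcases eq_or_lt_of_le hf with h2 | h3f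
  · have : f = 2 := h2.symm
    subst this
    norm_num at hcf ⊢
  · have e : c ^ (f-2) = c ^ (f-3) * c := by rw [← pow_succ]; congr 1; omega
    have hr : (-(2 * ((f:ℚ)^2 - 1)) / (3 * (f:ℚ))) * ((f:ℚ) * c ^ (f-2))
        = -(2 * ((f:ℚ)^2 - 1)) * c ^ (f-2) / 3 := by
      field_simp
    rw [hr, e]
    linear_combination (c^(f-3)/3) * h3 - (c^(f-3)*c/3) * h3'
      + (c^(f-3)*((f:ℚ)-1)*(2-(f:ℚ))/3) * hcf
end Scalar

/-! ### The recursively constructed solution -/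

noncomputable def GG (f : ℕ) (A : PowerSeries ℚ) : PowerSeries ℚ :=
  (C (R := ℚ) ((f:ℚ)/((f:ℚ)+1)) + A) ^ f - (C (R := ℚ) ((f:ℚ)/((f:ℚ)+1)) + A) ^ (f+1)

lemma fact_GG (f : ℕ) (A B : PowerSeries ℚ) :
    GG f A - GG f B = (A - B) * (Sg ((f:ℚ)/((f:ℚ)+1)) f A B - Sg ((f:ℚ)/((f:ℚ)+1)) (f+1) A B) := by
  have h1 := fact_pow ((f:ℚ)/((f:ℚ)+1)) f A B
  have h2 := fact_pow ((f:ℚ)/((f:ℚ)+1)) (f+1) A B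
  rw [GG, GG, mul_sub, ← h1, ← h2]; ring

noncomputable def pc (f : ℕ) : ℕ → ℚ
  | 0 => 0
  | 1 => -1
  | n + 2 =>
      -(coeff (R := ℚ) (n+3) (GG f (PowerSeries.mk fun i => if h : i < n + 2 then pc f i else 0)
        - GG f X)) / ((f:ℚ) * ((f:ℚ)/((f:ℚ)+1)) ^ (f-2))
  termination_by n => n
  decreasing_by exact h

noncomputable def Tn (f n : ℕ) : PowerSeries ℚ :=
  PowerSeries.mk fun i => if i < n then pc f i else 0

lemma pc_eq (f n : ℕ) :
    pc f (n+2) = -(coeff (R := ℚ) (n+3) (GG f (Tn f (n+2)) - GG f X))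
      / ((f:ℚ) * ((f:ℚ)/((f:ℚ)+1)) ^ (f-2)) := by
  rw [pc, Tn]
  simp only [dite_eq_ite]

lemma pc0 (f : ℕ) : pc f 0 = 0 := by simp [pc]
lemma pc1 (f : ℕ) : pc f 1 = -1 := by simp [pc]

lemma coeff_Tn (f n i : ℕ) : coeff (R := ℚ) i (Tn f n) = if i < n then pc f i else 0 := by
  rw [Tn, coeff_mk]

lemma Tn_cc (f n : ℕ) : constantCoeff (R := ℚ) (Tn f n) = 0 := by
  rw [← coeff_zero_eq_constantCoeff, coeff_Tn]
  split
  · exact pc0 f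
  · rfl

lemma Tn_c1 (f n : ℕ) (hn : 2 ≤ n) : coeff (R := ℚ) 1 (Tn f n) = -1 := by
  rw [coeff_Tn, if_pos (by omega)]
  exact pc1 f

lemma P_cc (f : ℕ) : constantCoeff (R := ℚ) (PowerSeries.mk (pc f)) = 0 := by
  rw [← coeff_zero_eq_constantCoeff, coeff_mk]; exact pc0 f

lemma P_c1 (f : ℕ) : coeff (R := ℚ) 1 (PowerSeries.mk (pc f)) = -1 := by
  rw [coeff_mk]; exact pc1 f

section Main
variable {f : ℕ} (hf : 2 ≤ f)

lemma hf1 : (f:ℚ) + 1 ≠ 0 := by positivity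

include hf

lemma hfQ : (f:ℚ) ≠ 0 := by
  have : (0:ℚ) < f := by exact_mod_cast lt_of_lt_of_le (by norm_num) hf
  exact ne_of_gt this

lemma hcf : ((f:ℚ) + 1) * ((f:ℚ)/((f:ℚ)+1)) = (f:ℚ) := by
  field_simp

lemma hcne : ((f:ℚ)/((f:ℚ)+1)) ≠ 0 := div_ne_zero (hfQ hf) hf1

lemma hKne : (f:ℚ) * ((f:ℚ)/((f:ℚ)+1)) ^ (f - 2) ≠ 0 :=
  mul_ne_zero (hfQ hf) (pow_ne_zero _ (hcne hf))

lemma exist_eq : GG f (PowerSeries.mk (pc f)) - GG f X = 0 := by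
  set c : ℚ := (f:ℚ)/((f:ℚ)+1) with hc
  ext m
  rw [map_zero]
  match m with
  | 0 | 1 | 2 =>
    rw [fact_GG]
    refine coeff_le2_mul_van _ (by norm_num) _ _ ?_ ?_ ?_
    · rw [map_sub, P_cc, constantCoeff_X, sub_zero]
    · exact S0 hf c (hcf hf) _ _ (P_cc f) constantCoeff_X
    · rw [S1 hf c (hcf hf) _ _ (P_cc f) constantCoeff_X, P_c1, coeff_one_X]
      norm_num
  | (n+3) =>
    have e : GG f (PowerSeries.mk (pc f)) - GG f X
        = (GG f (PowerSeries.mk (pc f)) - GG f (Tn f (n+2))) + (GG f (Tn f (n+2)) - GG f X) := by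
      ring
    rw [e, map_add, fact_GG]
    have hvan : ∀ j < n+2, coeff (R := ℚ) j (PowerSeries.mk (pc f) - Tn f (n+2)) = 0 := by
      intro j hj
      rw [map_sub, coeff_mk, coeff_Tn, if_pos hj, sub_self]
    have hs0 := S0 hf c (hcf hf) (PowerSeries.mk (pc f)) (Tn f (n+2)) (P_cc f) (Tn_cc f (n+2))
    have hkey := coeff_succ_mul_van (n+2) (PowerSeries.mk (pc f) - Tn f (n+2))
      (Sg c f (PowerSeries.mk (pc f)) (Tn f (n+2)) - Sg c (f+1) (PowerSeries.mk (pc f)) (Tn f (n+2)))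
      hvan hs0
    rw [show n+3 = (n+2)+1 from rfl, hkey]
    have hd : coeff (R := ℚ) (n+2) (PowerSeries.mk (pc f) - Tn f (n+2)) = pc f (n+2) := by
      rw [map_sub, coeff_mk, coeff_Tn, if_neg (lt_irrefl _), sub_zero]
    have hs1 : coeff (R := ℚ) 1 (Sg c f (PowerSeries.mk (pc f)) (Tn f (n+2))
        - Sg c (f+1) (PowerSeries.mk (pc f)) (Tn f (n+2))) = (f:ℚ) * c ^ (f-2) := by
      rw [S1 hf c (hcf hf) _ _ (P_cc f) (Tn_cc f (n+2)), P_c1, Tn_c1 f (n+2) (by omega)]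
      ring
    rw [hd, hs1, pc_eq]
    rw [div_mul_cancel₀ _ (hKne hf)]
    ring

lemma exist_sol :
    constantCoeff (R := ℚ) (PowerSeries.mk (pc f)) = 0 ∧ coeff (R := ℚ) 1 (PowerSeries.mk (pc f)) = -1 ∧
      GG f X = GG f (PowerSeries.mk (pc f)) := by
  refine ⟨P_cc f, P_c1 f, ?_⟩
  exact (sub_eq_zero.mp (exist_eq hf)).symm

lemma uniq_sol (P P' : PowerSeries ℚ)
    (h0 : constantCoeff (R := ℚ) P = 0) (h1 : coeff (R := ℚ) 1 P = -1) (hEq : GG f X = GG f P)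
    (h0' : constantCoeff (R := ℚ) P' = 0) (h1' : coeff (R := ℚ) 1 P' = -1) (hEq' : GG f X = GG f P') :
    P = P' := by
  set c : ℚ := (f:ℚ)/((f:ℚ)+1) with hc
  have hz : (P - P') * (Sg c f P P' - Sg c (f+1) P P') = 0 := by
    rw [← fact_GG, ← hEq, ← hEq', sub_self]
  rcases mul_eq_zero.mp hz with h | h
  · exact sub_eq_zero.mp h
  · exfalso
    have := S1 hf c (hcf hf) P P' h0 h0'
    rw [h, map_zero, h1, h1'] at this
    have : (f:ℚ) * c ^ (f-2) = 0 := by linarith [this]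
    exact hKne hf this

lemma extract_sol (P : PowerSeries ℚ)
    (h0 : constantCoeff (R := ℚ) P = 0) (h1 : coeff (R := ℚ) 1 P = -1) (hEq : GG f X = GG f P) :
    coeff (R := ℚ) 2 P = -(2 * ((f : ℚ) ^ 2 - 1)) / (3 * f) ∧
      coeff (R := ℚ) 3 P = -(4 * ((f : ℚ) ^ 2 - 1) ^ 2) / (9 * (f : ℚ) ^ 2) := by
  set c : ℚ := (f:ℚ)/((f:ℚ)+1) with hc
  set K : ℚ := (f:ℚ) * c ^ (f-2) with hK
  set p2v : ℚ := -(2 * ((f : ℚ) ^ 2 - 1)) / (3 * (f:ℚ)) with hp2v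
  -- the binomial comparison series
  set T1 : PowerSeries ℚ := C (R := ℚ) (-1) * X with hT1
  have hT1cc : constantCoeff (R := ℚ) T1 = 0 := by simp [hT1]
  have hT1c1 : coeff (R := ℚ) 1 T1 = -1 := by simp [hT1]
  have hT1c2 : coeff (R := ℚ) 2 T1 = 0 := by simp [hT1, coeff_X]
  -- coeff 3 extraction
  have hGX3 : coeff (R := ℚ) 3 (GG f X) = (f.choose 3 : ℚ) * c ^ (f-3) - ((f+1).choose 3 : ℚ) * c ^ (f-2) := by
    rw [GG, show (X : PowerSeries ℚ) = C (R := ℚ) 1 * X by rw [map_one, one_mul], map_sub,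
      coeff_binom, coeff_binom, show f+1-3 = f-2 by omega]
    norm_num
    rfl
  have hGT13 : coeff (R := ℚ) 3 (GG f T1)
      = -((f.choose 3 : ℚ) * c ^ (f-3)) + ((f+1).choose 3 : ℚ) * c ^ (f-2) := by
    rw [GG, hT1, map_sub, coeff_binom, coeff_binom, show f+1-3 = f-2 by omega]
    norm_num
    rfl
  have hs0 := S0 hf c (hcf hf) P T1 h0 hT1cc
  have hs1 : coeff (R := ℚ) 1 (Sg c f P T1 - Sg c (f+1) P T1) = K := by
    rw [S1 hf c (hcf hf) P T1 h0 hT1cc, h1, hT1c1, hK]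
    ring
  have key3 : coeff (R := ℚ) 3 (GG f X) - coeff (R := ℚ) 3 (GG f T1) = coeff (R := ℚ) 2 P * K := by
    rw [show coeff (R := ℚ) 3 (GG f X) = coeff (R := ℚ) 3 (GG f P) by rw [hEq], ← map_sub, fact_GG,
      coeff3_mul_van _ _ (by rw [map_sub, h0, hT1cc, sub_zero])
        (by rw [map_sub, h1, hT1c1, sub_self]) hs0,
      hs1, map_sub, hT1c2, sub_zero]
  have hq3 := Q3 hf c (hcf hf) (hfQ hf)
  have h2P : coeff (R := ℚ) 2 P = p2v := by
    have : coeff (R := ℚ) 2 P * K = p2v * K := by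
      rw [← key3, hGX3, hGT13, hp2v, hK]
      linear_combination hq3
    exact mul_right_cancel₀ (by rw [hK]; exact hKne hf) this
  refine ⟨h2P, ?_⟩
  -- coeff 4 extraction
  set T2 : PowerSeries ℚ := C (R := ℚ) (-1) * X + C (R := ℚ) p2v * X ^ 2 with hT2
  have hT2cc : constantCoeff (R := ℚ) T2 = 0 := by simp [hT2]
  have hT2c1 : coeff (R := ℚ) 1 T2 = -1 := by simp [hT2, coeff_X_pow]
  have hT2c2 : coeff (R := ℚ) 2 T2 = p2v := by simp [hT2, coeff_X, coeff_X_pow]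
  have hT2c3 : coeff (R := ℚ) 3 T2 = 0 := by simp [hT2, coeff_X, coeff_X_pow]
  have hGX4 : coeff (R := ℚ) 4 (GG f X)
      = (f.choose 4 : ℚ) * c ^ (f-4) - ((f+1).choose 4 : ℚ) * c ^ (f-3) := by
    rw [GG, show (X : PowerSeries ℚ) = C (R := ℚ) 1 * X by rw [map_one, one_mul], map_sub,
      coeff_binom, coeff_binom, show f+1-4 = f-3 by omega]
    norm_num
    rfl
  have hGT24 : coeff (R := ℚ) 4 (GG f T2)
      = ((f.choose 4 : ℚ) * c ^ (f-4) + (f:ℚ) * ((f-1).choose 2 : ℚ) * p2v * c ^ (f-3)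
          + (f.choose 2 : ℚ) * p2v ^ 2 * c ^ (f-2))
        - (((f+1).choose 4 : ℚ) * c ^ (f-3) + ((f:ℚ)+1) * (f.choose 2 : ℚ) * p2v * c ^ (f-2)
          + ((f+1).choose 2 : ℚ) * p2v ^ 2 * c ^ (f-1)) := by
    rw [GG, hT2, map_sub, coeff4_trinom c p2v f hf, coeff4_trinom c p2v (f+1) (by omega)]
    rw [show f+1-4 = f-3 by omega, show f+1-3 = f-2 by omega, show f+1-2 = f-1 by omega,
      show f+1-1 = f by omega]
    push_cast
    ring
  have hs0' := S0 hf c (hcf hf) P T2 h0 hT2cc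
  have hs1' : coeff (R := ℚ) 1 (Sg c f P T2 - Sg c (f+1) P T2) = K := by
    rw [S1 hf c (hcf hf) P T2 h0 hT2cc, h1, hT2c1, hK]
    ring
  have key4 : coeff (R := ℚ) 4 (GG f X) - coeff (R := ℚ) 4 (GG f T2) = coeff (R := ℚ) 3 P * K := by
    rw [show coeff (R := ℚ) 4 (GG f X) = coeff (R := ℚ) 4 (GG f P) by rw [hEq], ← map_sub, fact_GG,
      coeff4_mul_van _ _ (by rw [map_sub, h0, hT2cc, sub_zero])
        (by rw [map_sub, h1, hT2c1, sub_self])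
        (by rw [map_sub, h2P, hT2c2, sub_self]) hs0',
      hs1', map_sub, hT2c3, sub_zero]
  -- choose identities
  have hch1 : (f:ℚ) * ((f-1).choose 2 : ℚ) = 3 * (f.choose 3 : ℚ) := by
    have h := Nat.add_one_mul_choose_eq (f-1) 2
    rw [show f-1+1 = f by omega] at h
    norm_num at h
    have h' : f * ((f-1).choose 2) = 3 * (f.choose 3) := h.trans (Nat.mul_comm _ _)
    exact_mod_cast congrArg (Nat.cast (R:=ℚ)) h'
  have hch2 : ((f:ℚ)+1) * (f.choose 2 : ℚ) = 3 * ((f+1).choose 3 : ℚ) := by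
    have h := Nat.add_one_mul_choose_eq f 2
    norm_num at h
    have h' : (f+1) * (f.choose 2) = 3 * ((f+1).choose 3) := h.trans (Nat.mul_comm _ _)
    exact_mod_cast congrArg (Nat.cast (R:=ℚ)) h'
  have ha2 := A2 hf c (hcf hf)
  have h3P : coeff (R := ℚ) 3 P * K = (-p2v^2) * K := by
    rw [← key4, hGX4, hGT24]
    have expand : ((f.choose 4 : ℚ) * c ^ (f-4) - ((f+1).choose 4 : ℚ) * c ^ (f-3))
        - (((f.choose 4 : ℚ) * c ^ (f-4) + (f:ℚ) * ((f-1).choose 2 : ℚ) * p2v * c ^ (f-3)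
            + (f.choose 2 : ℚ) * p2v ^ 2 * c ^ (f-2))
          - (((f+1).choose 4 : ℚ) * c ^ (f-3) + ((f:ℚ)+1) * (f.choose 2 : ℚ) * p2v * c ^ (f-2)
            + ((f+1).choose 2 : ℚ) * p2v ^ 2 * c ^ (f-1)))
        = -p2v * ((f:ℚ) * ((f-1).choose 2 : ℚ) * c ^ (f-3)
              - ((f:ℚ)+1) * (f.choose 2 : ℚ) * c ^ (f-2))
          - p2v^2 * ((f.choose 2 : ℚ) * c ^ (f-2) - ((f+1).choose 2 : ℚ) * c ^ (f-1)) := by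
      ring
    rw [expand, hch1, hch2, ha2]
    have : (3:ℚ) * (f.choose 3 : ℚ) * c ^ (f-3) - 3 * ((f+1).choose 3 : ℚ) * c ^ (f-2)
        = 3 * ((f.choose 3 : ℚ) * c ^ (f-3) - ((f+1).choose 3 : ℚ) * c ^ (f-2)) := by ring
    rw [this]
    rw [hp2v, hK] at *
    linear_combination (-(3:ℚ)/2 * (-(2 * ((f:ℚ)^2 - 1)) / (3 * (f:ℚ)))) * hq3
  have h3P' : coeff (R := ℚ) 3 P = -p2v^2 :=
    mul_right_cancel₀ (by rw [hK]; exact hKne hf) h3P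
  rw [h3P', hp2v]
  have hfne := hfQ hf
  field_simp
  ring

end Main
end FVIaux

/-- Let `P(z) = -z + O(z²)` be the unique formal power series such that the two points
`y = f/(f+1) + z` and `ȳ = f/(f+1) + P(z)` satisfy `-y^{f+1} + y^f = -ȳ^{f+1} + ȳ^f`.
Then `P(z) = -z - (2(f²-1)/(3f))z² - (4(f²-1)²/(9f²))z³ + O(z⁴)`. -/
theorem framed_vertex_involution (f : ℕ) (hf : 2 ≤ f) :
    (∃! P : PowerSeries ℚ,
        PowerSeries.constantCoeff (R := ℚ) P = 0 ∧ PowerSeries.coeff (R := ℚ) 1 P = -1 ∧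
          (PowerSeries.C (R := ℚ) ((f : ℚ) / (f + 1)) + PowerSeries.X) ^ f -
              (PowerSeries.C (R := ℚ) ((f : ℚ) / (f + 1)) + PowerSeries.X) ^ (f + 1) =
            (PowerSeries.C (R := ℚ) ((f : ℚ) / (f + 1)) + P) ^ f -
              (PowerSeries.C (R := ℚ) ((f : ℚ) / (f + 1)) + P) ^ (f + 1)) ∧
      ∀ P : PowerSeries ℚ,
        PowerSeries.constantCoeff (R := ℚ) P = 0 → PowerSeries.coeff (R := ℚ) 1 P = -1 →
          (PowerSeries.C (R := ℚ) ((f : ℚ) / (f + 1)) + PowerSeries.X) ^ f -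
              (PowerSeries.C (R := ℚ) ((f : ℚ) / (f + 1)) + PowerSeries.X) ^ (f + 1) =
            (PowerSeries.C (R := ℚ) ((f : ℚ) / (f + 1)) + P) ^ f -
              (PowerSeries.C (R := ℚ) ((f : ℚ) / (f + 1)) + P) ^ (f + 1) →
            PowerSeries.coeff (R := ℚ) 2 P = -(2 * ((f : ℚ) ^ 2 - 1)) / (3 * f) ∧
              PowerSeries.coeff (R := ℚ) 3 P = -(4 * ((f : ℚ) ^ 2 - 1) ^ 2) / (9 * (f : ℚ) ^ 2) := by
  constructor
  · refine ⟨PowerSeries.mk (FVIaux.pc f), FVIaux.exist_sol hf, ?_⟩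
    intro y hy
    exact FVIaux.uniq_sol hf y (PowerSeries.mk (FVIaux.pc f)) hy.1 hy.2.1 hy.2.2
      (FVIaux.P_cc f) (FVIaux.P_c1 f) (FVIaux.exist_sol hf).2.2
  · intro P h0 h1 hEq
    exact FVIaux.extract_sol hf P h0 h1 hEq
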